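/- arXiv:1501.02374 — 2 statements merged into one kernel-verified Lean document; each statement's English description precedes it below -/
import Mathlib

section
/- For any two rooted binary trees T1, T2 on n labeled leaves, the precise K-interval cospeciation distance satisfies d_k(T1, T2) ≤ n − 2. -/
open Finset
open scoped Classical

noncomputable section

/-- An unrooted binary phylogenetic tree with `n` labeled leaves (`Sum.inl`)
and `n - 2` internal vertices (`Sum.inr`): a connected acyclic graph in which
every leaf has degree 1 and every internal vertex has degree 3. -/
def UTree (n : ℕ) : Type :=
  {G : SimpleGraph (Fin n ⊕ Fin (n - 2)) //
    G.Connected ∧ G.IsAcyclic ∧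
    (∀ i : Fin n, G.degree (Sum.inl i) = 1) ∧
    (∀ j : Fin (n - 2), G.degree (Sum.inr j) = 3)}

instance (n : ℕ) : Fintype (UTree n) := by
  unfold UTree; infer_instance

/-- The number of edges on the unique path between leaves `i` and `j`. -/
def leafDist {n : ℕ} (T : UTree n) (i j : Fin n) : ℕ :=
  T.1.dist (Sum.inl i) (Sum.inl j)

/-- The set of pairs `(i, j)` of leaves with `i < j`. -/
def leafPairs (n : ℕ) : Finset (Fin n × Fin n) :=
  univ.filter (fun p => p.1 < p.2)

/-- Edge difference distance: the `l₁` distance between vectorizations. -/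
def d_e {n : ℕ} (T1 T2 : UTree n) : ℝ :=
  ∑ p ∈ leafPairs n, |(leafDist T1 p.1 p.2 : ℝ) - (leafDist T2 p.1 p.2 : ℝ)|

/-- Path difference distance: the `l₂` distance between vectorizations. -/
def d_p {n : ℕ} (T1 T2 : UTree n) : ℝ :=
  Real.sqrt (∑ p ∈ leafPairs n, ((leafDist T1 p.1 p.2 : ℝ) - (leafDist T2 p.1 p.2 : ℝ)) ^ 2)

/-- Precise K-interval cospeciation distance: the `l_∞` distance between vectorizations. -/
def d_k {n : ℕ} (T1 T2 : UTree n) : ℕ :=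
  (leafPairs n).sup (fun p => Nat.dist (leafDist T1 p.1 p.2) (leafDist T2 p.1 p.2))

/-- Two trees are identified in `T_n` when there is a graph isomorphism fixing every leaf. -/
def LeafIso {n : ℕ} (T1 T2 : UTree n) : Prop :=
  ∃ e : (Fin n ⊕ Fin (n - 2)) ≃ (Fin n ⊕ Fin (n - 2)),
    (∀ i : Fin n, e (Sum.inl i) = Sum.inl i) ∧
    ∀ a b, T1.1.Adj a b ↔ T2.1.Adj (e a) (e b)

/-- A caterpillar tree: the internal vertices can be arranged along a path. -/
def Caterpillar {n : ℕ} (T : UTree n) : Prop :=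
  ∃ σ : Fin (n - 2) ≃ Fin (n - 2), ∀ a b : Fin (n - 2),
    T.1.Adj (Sum.inr a) (Sum.inr b) ↔ Nat.dist ((σ a) : ℕ) ((σ b) : ℕ) = 1

end

section AuxLemmas
open Finset
open scoped Classical
noncomputable section

variable {V : Type*} [Fintype V] {G : SimpleGraph V}

lemma adj_eq_of_degree_one {v u x : V} (hd : G.degree v = 1) (hu : G.Adj v u)
    (hx : G.Adj v x) : x = u := by
  have hu' : u ∈ G.neighborFinset v := by simpa using hu
  have hx' : x ∈ G.neighborFinset v := by simpa using hx
  exact Finset.card_le_one.mp (le_of_eq hd) x hx' u hu'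

lemma interior_two_le_degree {u v : V} (p : G.Walk u v) (hp : p.IsPath) :
    ∀ x ∈ p.support, x ≠ u → x ≠ v → 2 ≤ G.degree x := by
  induction p with
  | nil =>
    intro x hx hxu _
    simp only [SimpleGraph.Walk.support_nil, List.mem_singleton] at hx
    exact absurd hx hxu
  | @cons a w b h q ih =>
    rw [SimpleGraph.Walk.cons_isPath_iff] at hp
    intro x hx hxu hxv
    rw [SimpleGraph.Walk.support_cons, List.mem_cons] at hx
    rcases hx with rfl | hx
    · exact absurd rfl hxu
    by_cases hxw : x = w
    · subst hxw
      cases q with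
      | nil => exact absurd rfl hxv
      | @cons _ y _ h' q' =>
        have hy : y ∈ (SimpleGraph.Walk.cons h' q').support :=
          by simp [SimpleGraph.Walk.support_cons]
        have hay : a ≠ y := fun hh => hp.2 (hh ▸ hy)
        have hsub : ({a, y} : Finset V) ⊆ G.neighborFinset x := by
          intro z hz
          simp only [Finset.mem_insert, Finset.mem_singleton] at hz
          rcases hz with rfl | rfl
          · simpa using h.symm
          · simpa using h'
        have := Finset.card_le_card hsub
        rwa [Finset.card_insert_of_notMem (by simpa using hay), Finset.card_singleton] at this
    · exact ih hp.1 x hx hxw hxv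

/-- Lower bound: in a tree whose leaves all have degree 1 and which has an
internal vertex, two distinct leaves are at distance ≥ 2. -/
lemma two_le_leaf_dist {m r : ℕ} {G : SimpleGraph (Fin m ⊕ Fin r)}
    (hc : G.Connected) (hleaf : ∀ i, G.degree (Sum.inl i) = 1)
    (j0 : Fin r) {i j : Fin m} (hij : i ≠ j) :
    2 ≤ G.dist (Sum.inl i) (Sum.inl j) := by
  have hne : (Sum.inl i : Fin m ⊕ Fin r) ≠ Sum.inl j := by
    simp [hij]
  have hpos := hc.pos_dist_of_ne hne
  rcases Nat.lt_or_ge (G.dist (Sum.inl i) (Sum.inl j)) 2 with h2 | h2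
  · exfalso
    have h1 : G.dist (Sum.inl i) (Sum.inl j) = 1 := by omega
    have hadj : G.Adj (Sum.inl i) (Sum.inl j) := SimpleGraph.dist_eq_one_iff_adj.mp h1
    -- infinite descent: a shortest walk from leaf i to internal j0 can be shortened
    have hne2 : (Sum.inl i : Fin m ⊕ Fin r) ≠ Sum.inr j0 := by simp
    have hpos2 := hc.pos_dist_of_ne hne2
    obtain ⟨w, hw⟩ := SimpleGraph.exists_walk_of_dist_ne_zero (Nat.pos_iff_ne_zero.mp hpos2)
    cases w with
    | @cons _ x _ h1' w1 =>
      have hx : x = Sum.inl j := adj_eq_of_degree_one (hleaf i) hadj h1'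
      subst hx
      cases w1 with
      | @cons _ y _ h2' w2 =>
        have hy : y = Sum.inl i := adj_eq_of_degree_one (hleaf j) hadj.symm h2'
        subst hy
        have hle := SimpleGraph.dist_le w2
        simp only [SimpleGraph.Walk.length_cons] at hw
        omega
  · exact h2

/-- Upper bound: leaf-to-leaf distance is at most (number of internal vertices) + 1. -/
lemma leaf_dist_le {n : ℕ} {G : SimpleGraph (Fin (n + 1) ⊕ Fin (n + 1 - 2))}
    (hc : G.Connected) (hleaf : ∀ i, G.degree (Sum.inl i) = 1)
    (i j : Fin (n + 1)) : G.dist (Sum.inl i) (Sum.inl j) ≤ n := by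
  by_cases hij : i = j
  · subst hij; simp [SimpleGraph.dist_self]
  have hn1 : 1 ≤ n := by
    by_contra h
    interval_cases n
    exact hij ((Fin.fin_one_eq_zero i).trans (Fin.fin_one_eq_zero j).symm)
  have hne : (Sum.inl i : Fin (n+1) ⊕ Fin (n+1-2)) ≠ Sum.inl j := by simp [hij]
  obtain ⟨w⟩ := hc (Sum.inl i) (Sum.inl j)
  set p := w.bypass with hp
  have hpath : p.IsPath := w.bypass_isPath
  have hdist : G.dist (Sum.inl i) (Sum.inl j) ≤ p.length := SimpleGraph.dist_le p
  -- bound p.length via support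
  have hsub : p.support.toFinset ⊆
      ({Sum.inl i, Sum.inl j} : Finset (Fin (n+1) ⊕ Fin (n+1-2))) ∪
        Finset.univ.image Sum.inr := by
    intro x hx
    rw [List.mem_toFinset] at hx
    rcases x with k | k
    · by_cases hk : Sum.inl k = (Sum.inl i : Fin (n+1) ⊕ Fin (n+1-2))
      · simp [hk]
      by_cases hk' : Sum.inl k = (Sum.inl j : Fin (n+1) ⊕ Fin (n+1-2))
      · simp [hk']
      · exfalso
        have := interior_two_le_degree p hpath _ hx hk hk'
        rw [hleaf k] at this
        omega
    · simp
  have hcard : p.support.toFinset.card ≤ 2 + (n + 1 - 2) := by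
    calc p.support.toFinset.card ≤
        (({Sum.inl i, Sum.inl j} : Finset (Fin (n+1) ⊕ Fin (n+1-2))) ∪
          Finset.univ.image Sum.inr).card := Finset.card_le_card hsub
      _ ≤ ({Sum.inl i, Sum.inl j} : Finset (Fin (n+1) ⊕ Fin (n+1-2))).card +
          (Finset.univ.image (Sum.inr : Fin (n+1-2) → _)).card := Finset.card_union_le _ _
      _ ≤ 2 + (n + 1 - 2) := by
          gcongr
          · exact (Finset.card_insert_le _ _).trans (by simp)
          · exact (Finset.card_image_le).trans (by simp)
  have hlen : p.support.length = p.support.toFinset.card :=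
    (List.toFinset_card_of_nodup hpath.support_nodup).symm
  have := p.length_support
  omega

end
end AuxLemmas

/-- A rooted binary tree on `n` labeled leaves is identified with an unrooted
binary tree on `n + 1` leaves (the root being an extra leaf).  For any two
such trees, the precise K-interval cospeciation distance satisfies
`d_k(T1, T2) ≤ n - 2`. -/
theorem rooted_kic_bound (n : ℕ) (T1 T2 : UTree (n + 1)) :
    d_k T1 T2 ≤ n - 2 := by
  obtain ⟨hc1, -, hl1, -⟩ := T1.2
  obtain ⟨hc2, -, hl2, -⟩ := T2.2
  apply Finset.sup_le
  intro p hp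
  have hlt : p.1 < p.2 := by simpa [leafPairs] using hp
  have hv : (p.1 : ℕ) < (p.2 : ℕ) := hlt
  have hij : p.1 ≠ p.2 := ne_of_lt hlt
  have hub1 : leafDist T1 p.1 p.2 ≤ n := leaf_dist_le hc1 hl1 p.1 p.2
  have hub2 : leafDist T2 p.1 p.2 ≤ n := leaf_dist_le hc2 hl2 p.1 p.2
  have hne : (Sum.inl p.1 : Fin (n+1) ⊕ Fin (n+1-2)) ≠ Sum.inl p.2 := by simp [hij]
  have hlb1 : 1 ≤ leafDist T1 p.1 p.2 := hc1.pos_dist_of_ne hne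
  have hlb2 : 1 ≤ leafDist T2 p.1 p.2 := hc2.pos_dist_of_ne hne
  have hdist : Nat.dist (leafDist T1 p.1 p.2) (leafDist T2 p.1 p.2) =
      leafDist T1 p.1 p.2 - leafDist T2 p.1 p.2 +
        (leafDist T2 p.1 p.2 - leafDist T1 p.1 p.2) := rfl
  rcases Nat.lt_or_ge n 2 with hn | hn
  · have h2 := p.2.isLt
    -- so n = 1, and both distances equal 1
    omega
  · have j0 : Fin (n + 1 - 2) := ⟨0, by omega⟩
    have hlb1' : 2 ≤ leafDist T1 p.1 p.2 := two_le_leaf_dist hc1 hl1 j0 hij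
    have hlb2' : 2 ≤ leafDist T2 p.1 p.2 := two_le_leaf_dist hc2 hl2 j0 hij
    omega
end

section
/- If T1 and T2 are unrooted binary trees on n labeled leaves with d_k(T1,T2) = n − 3 (the maximal possible value), then at least one of T1, T2 is a caterpillar tree. -/
open Finset
open scoped Classical

section Aux


open SimpleGraph

variable {V : Type*} {G : SimpleGraph V}

lemma aux_dist_getVert_le (hc : G.Connected) {u v : V} (p : G.Walk u v) :
    ∀ (k s : ℕ), s + k ≤ p.length → G.dist (p.getVert s) (p.getVert (s + k)) ≤ k := by
  intro k
  induction k with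
  | zero => intro s _; simp
  | succ k ih =>
    intro s hs
    have h2 : G.Adj (p.getVert (s + k)) (p.getVert (s + k + 1)) :=
      p.adj_getVert_succ (by omega)
    have h3 : G.dist (p.getVert (s + k)) (p.getVert (s + k + 1)) = 1 :=
      dist_eq_one_iff_adj.mpr h2
    have h4 := hc.dist_triangle (u := p.getVert s) (v := p.getVert (s + k))
      (w := p.getVert (s + k + 1))
    have h1 : G.dist (p.getVert s) (p.getVert (s + k)) ≤ k := ih s (by omega)
    rw [show s + (k + 1) = s + k + 1 by omega]
    omega

lemma aux_dist_getVert_eq (hc : G.Connected) {u v : V} (p : G.Walk u v)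
    (hp : p.length = G.dist u v) {s t : ℕ} (hst : s ≤ t) (ht : t ≤ p.length) :
    G.dist (p.getVert s) (p.getVert t) = t - s := by
  have hle : G.dist (p.getVert s) (p.getVert t) ≤ t - s := by
    have := aux_dist_getVert_le hc p (t - s) s (by omega)
    rwa [show s + (t - s) = t by omega] at this
  have h1 : G.dist u (p.getVert s) ≤ s := by
    have := aux_dist_getVert_le hc p s 0 (by omega)
    rwa [show (0 : ℕ) + s = s by omega, p.getVert_zero] at this
  have h2 : G.dist (p.getVert t) v ≤ p.length - t := by
    have := aux_dist_getVert_le hc p (p.length - t) t (by omega)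
    rwa [show t + (p.length - t) = p.length by omega, p.getVert_length] at this
  have h3 := hc.dist_triangle (u := u) (v := p.getVert s) (w := p.getVert t)
  have h4 := hc.dist_triangle (u := u) (v := p.getVert t) (w := v)
  omega

lemma aux_dist_getVert_natDist (hc : G.Connected) {u v : V} (p : G.Walk u v)
    (hp : p.length = G.dist u v) {s t : ℕ} (hs : s ≤ p.length) (ht : t ≤ p.length) :
    G.dist (p.getVert s) (p.getVert t) = Nat.dist s t := by
  rcases le_total s t with h | h
  · rw [aux_dist_getVert_eq hc p hp h ht, Nat.dist_eq_sub_of_le h]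
  · rw [G.dist_comm, aux_dist_getVert_eq hc p hp h hs, Nat.dist_eq_sub_of_le_right h]

end Aux

section TreeAux

open SimpleGraph

variable {n : ℕ}

/-- A leaf has a unique neighbor. -/
lemma utree_unique_nbr (T : UTree n) (i : Fin n) {x y : Fin n ⊕ Fin (n - 2)}
    (hx : T.1.Adj (Sum.inl i) x) (hy : T.1.Adj (Sum.inl i) y) : x = y := by
  have hdeg : T.1.degree (Sum.inl i) = 1 := T.2.2.2.1 i
  have hcard : (T.1.neighborFinset (Sum.inl i)).card ≤ 1 := le_of_eq hdeg
  exact Finset.card_le_one.mp hcard x ((T.1.mem_neighborFinset _ _).mpr hx)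
    y ((T.1.mem_neighborFinset _ _).mpr hy)

/-- Interior vertices of a shortest walk between two vertices are internal. -/
lemma utree_interior_internal (T : UTree n) {u v : Fin n ⊕ Fin (n - 2)}
    (p : T.1.Walk u v) (hp : p.length = T.1.dist u v) {k : ℕ}
    (hk1 : 1 ≤ k) (hk2 : k < p.length) :
    ∃ b : Fin (n - 2), p.getVert k = Sum.inr b := by
  cases hgv : p.getVert k with
  | inr b => exact ⟨b, rfl⟩
  | inl c =>
    exfalso
    have hc := T.2.1
    have h1 : T.1.Adj (p.getVert (k - 1)) (p.getVert k) := by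
      have := p.adj_getVert_succ (i := k - 1) (by omega)
      rwa [show k - 1 + 1 = k by omega] at this
    have h2 : T.1.Adj (p.getVert k) (p.getVert (k + 1)) := p.adj_getVert_succ hk2
    have hne : p.getVert (k - 1) ≠ p.getVert (k + 1) := by
      intro heq
      have hd := aux_dist_getVert_eq hc p hp (s := k - 1) (t := k + 1) (by omega) (by omega)
      rw [heq] at hd
      simp only [SimpleGraph.dist_self] at hd
      omega
    rw [hgv] at h1 h2
    exact hne (utree_unique_nbr T c h1.symm h2)

/-- Distinct leaves are at distance at least 2. -/
lemma utree_two_le_leafDist (hn : 4 ≤ n) (T : UTree n) {i j : Fin n} (hij : i ≠ j) :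
    2 ≤ leafDist T i j := by
  have hc := T.2.1
  have hne : (Sum.inl i : Fin n ⊕ Fin (n - 2)) ≠ Sum.inl j := by
    simpa using hij
  have h0 : T.1.dist (Sum.inl i) (Sum.inl j) ≠ 0 :=
    (hc.dist_eq_zero_iff).not.mpr (by simpa using hij)
  have h1 : T.1.dist (Sum.inl i) (Sum.inl j) ≠ 1 := by
    intro h1
    have hadj : T.1.Adj (Sum.inl i) (Sum.inl j) := dist_eq_one_iff_adj.mp h1
    -- consider a shortest path from leaf i to an internal vertex
    have hv0 : 0 < n - 2 := by omega
    set w : Fin n ⊕ Fin (n - 2) := Sum.inr ⟨0, hv0⟩ with hw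
    have hnew : (Sum.inl i : Fin n ⊕ Fin (n - 2)) ≠ w := by simp [hw]
    obtain ⟨p, hplen⟩ := hc.exists_walk_length_eq_dist (Sum.inl i) w
    have hd0 : T.1.dist (Sum.inl i) w ≠ 0 := (hc.dist_eq_zero_iff).not.mpr hnew
    have hd1 : T.1.dist (Sum.inl i) w ≠ 1 := by
      intro h
      have : T.1.Adj (Sum.inl i) w := dist_eq_one_iff_adj.mp h
      have := utree_unique_nbr T i hadj this
      simp [hw] at this
    have hlen2 : 2 ≤ p.length := by omega
    have hg1 : p.getVert 1 = Sum.inl j := by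
      have hadj1 : T.1.Adj (Sum.inl i) (p.getVert 1) := by
        have := p.adj_getVert_succ (i := 0) (by omega)
        rwa [p.getVert_zero] at this
      exact utree_unique_nbr T i hadj1 hadj
    have hg2 : p.getVert 2 = Sum.inl i := by
      have hadj2 : T.1.Adj (p.getVert 1) (p.getVert 2) := p.adj_getVert_succ (by omega)
      rw [hg1] at hadj2
      exact utree_unique_nbr T j hadj2 hadj.symm
    have hd := aux_dist_getVert_eq hc p hplen (s := 0) (t := 2) (by omega) (by omega)
    rw [p.getVert_zero, hg2] at hd
    simp only [SimpleGraph.dist_self] at hd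
    omega
  unfold leafDist
  omega


/-- A tree with a pair of leaves at distance at least `n - 1` is a caterpillar. -/
lemma utree_caterpillar_of_long (hn : 4 ≤ n) (T : UTree n) {i j : Fin n}
    (hd : n - 1 ≤ leafDist T i j) : Caterpillar T := by
  have hc := T.2.1
  obtain ⟨p, hplen⟩ := hc.exists_walk_length_eq_dist (Sum.inl i) (Sum.inl j)
  have hlen : n - 1 ≤ p.length := by
    unfold leafDist at hd; omega
  have hub : p.length ≤ n - 1 := by
    by_contra hcon
    push_neg at hcon
    have hmem : ∀ m : Fin (n - 1), ∃ b, p.getVert (m + 1) = Sum.inr b := fun m =>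
      utree_interior_internal T p hplen (by omega) (by omega)
    have hginj : Function.Injective (fun m : Fin (n - 1) => (hmem m).choose) := by
      intro s t hst
      have h1 := (hmem s).choose_spec
      have h2 := (hmem t).choose_spec
      simp only at hst
      rw [hst, ← h2] at h1
      have hD := aux_dist_getVert_natDist hc p hplen
        (s := (s : ℕ) + 1) (t := (t : ℕ) + 1) (by omega) (by omega)
      rw [h1, SimpleGraph.dist_self] at hD
      have hst' : (s : ℕ) + 1 = (t : ℕ) + 1 := Nat.eq_of_dist_eq_zero (by omega)
      exact Fin.ext (by omega)
    have := Fintype.card_le_of_injective _ hginj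
    simp only [Fintype.card_fin] at this
    omega
  have hlen' : p.length = n - 1 := le_antisymm hub hlen
  have hmem : ∀ m : Fin (n - 2), ∃ b, p.getVert (m + 1) = Sum.inr b := fun m =>
    utree_interior_internal T p hplen (by omega) (by omega)
  set f : Fin (n - 2) → Fin (n - 2) := fun m => (hmem m).choose with hf
  have hspec : ∀ m : Fin (n - 2), p.getVert (m + 1) = Sum.inr (f m) := fun m =>
    (hmem m).choose_spec
  have hfinj : Function.Injective f := by
    intro s t hst
    have h1 := hspec s
    rw [hst, ← hspec t] at h1
    have hD := aux_dist_getVert_natDist hc p hplen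
      (s := (s : ℕ) + 1) (t := (t : ℕ) + 1) (by omega) (by omega)
    rw [h1, SimpleGraph.dist_self] at hD
    have hst' : (s : ℕ) + 1 = (t : ℕ) + 1 := Nat.eq_of_dist_eq_zero (by omega)
    exact Fin.ext (by omega)
  have hfbij : Function.Bijective f := (Finite.injective_iff_bijective).mp hfinj
  set τ : Fin (n - 2) ≃ Fin (n - 2) := Equiv.ofBijective f hfbij with hτ
  refine ⟨τ.symm, ?_⟩
  intro a b
  have ha : p.getVert ((τ.symm a : ℕ) + 1) = Sum.inr a := by
    have h := hspec (τ.symm a)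
    rwa [show f (τ.symm a) = a from τ.apply_symm_apply a] at h
  have hb : p.getVert ((τ.symm b : ℕ) + 1) = Sum.inr b := by
    have h := hspec (τ.symm b)
    rwa [show f (τ.symm b) = b from τ.apply_symm_apply b] at h
  have hD := aux_dist_getVert_natDist hc p hplen
    (s := (τ.symm a : ℕ) + 1) (t := (τ.symm b : ℕ) + 1) (by omega) (by omega)
  rw [ha, hb] at hD
  have hnat : Nat.dist ((τ.symm a : ℕ) + 1) ((τ.symm b : ℕ) + 1)
      = Nat.dist ((τ.symm a : ℕ)) ((τ.symm b : ℕ)) := by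
    simp [Nat.dist]
  rw [hnat] at hD
  constructor
  · intro hadj
    rw [← hD]
    exact SimpleGraph.dist_eq_one_iff_adj.mpr hadj
  · intro hnd
    exact SimpleGraph.dist_eq_one_iff_adj.mp (by rw [hD, hnd])

end TreeAux

/-- If two unrooted binary trees on `n` labeled leaves attain the maximal
possible precise K-interval cospeciation distance `n - 3`, then at least one
of them is a caterpillar tree. -/
theorem kic_max_implies_caterpillar (n : ℕ) (hn : 4 ≤ n) (T1 T2 : UTree n)
    (h : d_k T1 T2 = n - 3) :
    Caterpillar T1 ∨ Caterpillar T2 := by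
  have hne : (leafPairs n).Nonempty := by
    refine ⟨(⟨0, by omega⟩, ⟨1, by omega⟩), ?_⟩
    simp [leafPairs, Fin.mk_lt_mk]
  obtain ⟨q, hq, hsup⟩ := Finset.exists_mem_eq_sup (leafPairs n) hne
    (fun p => Nat.dist (leafDist T1 p.1 p.2) (leafDist T2 p.1 p.2))
  unfold d_k at h
  have hval : Nat.dist (leafDist T1 q.1 q.2) (leafDist T2 q.1 q.2) = n - 3 :=
    hsup.symm.trans h
  have hqlt : q.1 < q.2 := (Finset.mem_filter.mp hq).2
  have hqne : q.1 ≠ q.2 := ne_of_lt hqlt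
  have h1 : 2 ≤ leafDist T1 q.1 q.2 := utree_two_le_leafDist hn T1 hqne
  have h2 : 2 ≤ leafDist T2 q.1 q.2 := utree_two_le_leafDist hn T2 hqne
  simp only [Nat.dist] at hval
  rcases le_total (leafDist T1 q.1 q.2) (leafDist T2 q.1 q.2) with hle | hle
  · exact Or.inr (utree_caterpillar_of_long hn T2 (i := q.1) (j := q.2) (by omega))
  · exact Or.inl (utree_caterpillar_of_long hn T1 (i := q.1) (j := q.2) (by omega))
end
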